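/- Let p ≥ 2 and let G be a 2p-regular graph with no induced K_{1,p+1}. If G⃗ is an orientation of G admitting an out-neighbourhood bijective homomorphism ψ to L⃗(K_{p+2}), then ψ is a locally bijective homomorphism from G to L*(K_{p+2}). -/

import Mathlib

open SimpleGraph

/-- Locally bijective homomorphism between simple graphs. -/
def IsLBH {V W : Type*} (G : SimpleGraph V) (H : SimpleGraph W) (psi : V → W) : Prop :=
  (∀ ⦃u v⦄, G.Adj u v → H.Adj (psi u) (psi v)) ∧
    ∀ v, Set.BijOn psi (G.neighborSet v) (H.neighborSet (psi v))

/-- `A` is an orientation of the simple graph `G`. -/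
def IsOrientation {V : Type*} (G : SimpleGraph V) (A : V → V → Prop) : Prop :=
  (∀ u v, G.Adj u v ↔ (A u v ∨ A v u)) ∧ ∀ u v, A u v → ¬ A v u

/-- Out-neighbourhood bijective homomorphism between oriented graphs given by
their arc relations. -/
def IsOBH {V W : Type*} (A : V → V → Prop) (B : W → W → Prop) (psi : V → W) : Prop :=
  (∀ ⦃u v⦄, A u v → B (psi u) (psi v)) ∧
    ∀ v, Set.BijOn psi {x | A v x} {y | B (psi v) y}

/-- Vertex set of the oriented line graph of the complete graph `K_q` on `ZMod q`. -/
def LKV (q : ℕ) : Type := {x : ZMod q × ZMod q // x.1 ≠ x.2}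

/-- Arc relation of the oriented line graph `L⃗(K_q)`: an arc from `(i,j)` to `(j,k)`
whenever `k ∉ {i, j}`. -/
def LKArc (q : ℕ) (a b : LKV q) : Prop := a.1.2 = b.1.1 ∧ a.1.1 ≠ b.1.2

/-- The underlying undirected graph `L*(K_q)` of `L⃗(K_q)`. -/
def LstarK (q : ℕ) : SimpleGraph (LKV q) := SimpleGraph.fromRel (LKArc q)

instance LKV.finite (q : ℕ) [NeZero q] : Finite (LKV q) := Subtype.finite

lemma LKArc.ne {q : ℕ} {a b : LKV q} (h : LKArc q a b) : a ≠ b := by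
  rintro rfl; exact a.2 h.1.symm

lemma lstar_adj {q : ℕ} (a b : LKV q) :
    (LstarK q).Adj a b ↔ LKArc q a b ∨ LKArc q b a := by
  show (SimpleGraph.fromRel (LKArc q)).Adj a b ↔ _
  rw [SimpleGraph.fromRel_adj]
  constructor
  · rintro ⟨-, h⟩; exact h
  · rintro h; refine ⟨?_, h⟩; rcases h with h | h
    exacts [h.ne, h.ne.symm]

lemma ncard_ne_pair {q : ℕ} [NeZero q] {u w : ZMod q} (h : u ≠ w) :
    {k : ZMod q | k ≠ u ∧ k ≠ w}.ncard = q - 2 := by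
  have he : {k : ZMod q | k ≠ u ∧ k ≠ w} = ({u, w} : Set (ZMod q))ᶜ := by
    ext k; simp [not_or]
  have h2 : ({u, w} : Set (ZMod q)).ncard = 2 := Set.ncard_pair h
  have h3 := Set.ncard_add_ncard_compl ({u, w} : Set (ZMod q))
  rw [Nat.card_zmod, h2] at h3
  rw [he]
  omega

lemma outset_ncard {q : ℕ} [NeZero q] (a : LKV q) :
    {y : LKV q | LKArc q a y}.ncard = q - 2 := by
  have hinj : Set.InjOn (fun y : LKV q => y.1.2) {y | LKArc q a y} := by
    intro y hy z hz h
    apply Subtype.ext; apply Prod.ext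
    · rw [← hy.1, ← hz.1]
    · exact h
  have himg : (fun y : LKV q => y.1.2) '' {y | LKArc q a y}
      = {k : ZMod q | k ≠ a.1.1 ∧ k ≠ a.1.2} := by
    ext k
    constructor
    · rintro ⟨y, hy, rfl⟩
      exact ⟨fun h => hy.2 h.symm, fun h => y.2 (hy.1.symm.trans h.symm)⟩
    · intro hk
      exact ⟨⟨(a.1.2, k), fun h => hk.2 h.symm⟩, ⟨rfl, fun h => hk.1 h.symm⟩, rfl⟩
  rw [← Set.ncard_image_of_injOn hinj, himg, ncard_ne_pair a.2]

lemma inset_ncard {q : ℕ} [NeZero q] (b : LKV q) :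
    {y : LKV q | LKArc q y b}.ncard = q - 2 := by
  have hinj : Set.InjOn (fun y : LKV q => y.1.1) {y | LKArc q y b} := by
    intro y hy z hz h
    apply Subtype.ext; apply Prod.ext
    · exact h
    · rw [hy.1, hz.1]
  have himg : (fun y : LKV q => y.1.1) '' {y | LKArc q y b}
      = {k : ZMod q | k ≠ b.1.1 ∧ k ≠ b.1.2} := by
    ext k
    constructor
    · rintro ⟨y, hy, rfl⟩
      exact ⟨fun h => y.2 (h.trans hy.1.symm), hy.2⟩
    · intro hk
      exact ⟨⟨(k, b.1.1), hk.1⟩, ⟨rfl, fun h => hk.2 h⟩, rfl⟩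
  rw [← Set.ncard_image_of_injOn hinj, himg, ncard_ne_pair b.2]

lemma emb_of_star {V : Type*} {G : SimpleGraph V} {v : V} {S : Finset V} {n : ℕ}
    (hcard : S.card = n) (hv : v ∉ S) (hadj : ∀ x ∈ S, G.Adj v x)
    (hind : ∀ x ∈ S, ∀ y ∈ S, ¬ G.Adj x y) :
    Nonempty (completeBipartiteGraph (Fin 1) (Fin n) ↪g G) := by
  have hc : Fintype.card S = n := by rw [Fintype.card_coe]; exact hcard
  let e := (Fintype.equivFinOfCardEq hc).symm
  refine ⟨⟨⟨Sum.elim (fun _ => v) (fun i => (e i : V)), ?_⟩, ?_⟩⟩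
  · rintro (a | a) (b | b) h <;> simp only [Sum.elim_inl, Sum.elim_inr] at h
    · exact congrArg Sum.inl (Subsingleton.elim a b)
    · exact absurd (by rw [h]; exact (e b).2) hv
    · exact absurd (by rw [← h]; exact (e a).2) hv
    · exact congrArg Sum.inr (e.injective (Subtype.ext h))
  · rintro (a | a) (b | b)
    · simp; exact G.irrefl
    · simp; exact hadj _ (e b).2
    · simp; exact (hadj _ (e a).2).symm
    · simp; exact hind _ (e a).2 _ (e b).2

theorem stmt15 {V : Type*} [Fintype V] (p : ℕ) (hp : 2 ≤ p)
    (G : SimpleGraph V) [DecidableRel G.Adj] (hreg : G.IsRegularOfDegree (2 * p))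
    (hfree : ¬ Nonempty (completeBipartiteGraph (Fin 1) (Fin (p + 1)) ↪g G))
    (A : V → V → Prop) (hA : IsOrientation G A)
    (psi : V → LKV (p + 2)) (hpsi : IsOBH A (LKArc (p + 2)) psi) :
    IsLBH G (LstarK (p + 2)) psi := by
  classical
  obtain ⟨hGA, hasym⟩ := hA
  obtain ⟨hhom, hbij⟩ := hpsi
  have hmap : ∀ ⦃u v⦄, G.Adj u v → (LstarK (p+2)).Adj (psi u) (psi v) := by
    intro u v huv
    rcases (hGA u v).1 huv with h | h
    · exact (lstar_adj _ _).2 (Or.inl (hhom h))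
    · exact (lstar_adj _ _).2 (Or.inr (hhom h))
  refine ⟨hmap, fun v => ?_⟩
  set b := psi v with hb
  set Nout : Set V := {x | A v x} with hNout
  set Nin : Set V := {x | A x v} with hNin
  set Tout : Set (LKV (p+2)) := {y | LKArc (p+2) b y} with hTout
  set Tin : Set (LKV (p+2)) := {y | LKArc (p+2) y b} with hTin
  have hbv : Set.BijOn psi Nout Tout := hbij v
  have hdisjN : Disjoint Nout Nin := by
    rw [Set.disjoint_left]; intro x hx1 hx2; exact hasym v x hx1 hx2
  have hdisjT : Disjoint Tout Tin := by
    rw [Set.disjoint_left]; intro y hy1 hy2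
    exact hy2.2 hy1.1.symm
  have hNeq : G.neighborSet v = Nout ∪ Nin := by
    ext x
    simp only [mem_neighborSet, Set.mem_union, hNout, hNin, Set.mem_setOf_eq]
    exact hGA v x
  have hToutcard : Tout.ncard = p := by
    have := outset_ncard (q := p+2) b
    simpa using this
  have hTincard : Tin.ncard = p := by
    have := inset_ncard (q := p+2) b
    simpa using this
  have hNoutcard : Nout.ncard = p := by
    rw [← hToutcard, ← hbv.image_eq, Set.ncard_image_of_injOn hbv.injOn]
  have hNcard : (G.neighborSet v).ncard = 2 * p := by
    have hcoe : (G.neighborFinset v : Set V) = G.neighborSet v := by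
      ext x; simp [SimpleGraph.mem_neighborFinset]
    rw [← hcoe, Set.ncard_coe_finset]
    exact hreg v
  have hNincard : Nin.ncard = p := by
    have h1 : (Nout ∪ Nin).ncard = Nout.ncard + Nin.ncard :=
      Set.ncard_union_eq hdisjN (Set.toFinite _) (Set.toFinite _)
    rw [hNeq] at hNcard
    omega
  have hmtin : Set.MapsTo psi Nin Tin := fun x hx => hhom hx
  have hsec : ∀ x ∈ Nin, (psi x).1.2 = b.1.1 := fun x hx => (hhom hx).1
  have hinjin : Set.InjOn psi Nin := by
    by_contra hni
    rw [Set.InjOn] at hni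
    push_neg at hni
    obtain ⟨x₁, hx₁, x₂, hx₂, heq, hne⟩ := hni
    have hindep : ∀ x ∈ Nin, ∀ y ∈ Nin, ¬ G.Adj x y := by
      intro x hx y hy hxy
      rcases (hGA x y).1 hxy with h | h
      · exact (psi y).2 (((hhom h).1.symm.trans (hsec x hx)).trans (hsec y hy).symm)
      · exact (psi x).2 (((hhom h).1.symm.trans (hsec y hy)).trans (hsec x hx).symm)
    have himsub : psi '' Nin ⊆ Tin := hmtin.image_subset
    have himeq : psi '' Nin = psi '' (Nin \ {x₁}) := by
      apply Set.Subset.antisymm ?_ (Set.image_mono Set.diff_subset)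
      rintro y ⟨x, hx, rfl⟩
      by_cases hxx : x = x₁
      · subst hxx
        refine ⟨x₂, ⟨hx₂, ?_⟩, heq.symm⟩
        simp only [Set.mem_singleton_iff]
        exact fun h => hne h.symm
      · exact ⟨x, ⟨hx, by simp [hxx]⟩, rfl⟩
    have hcardlt : (psi '' Nin).ncard < p := by
      rw [himeq]
      calc (psi '' (Nin \ {x₁})).ncard ≤ (Nin \ {x₁}).ncard :=
            Set.ncard_image_le (Set.toFinite _)
        _ = Nin.ncard - 1 := Set.ncard_diff_singleton_of_mem hx₁
        _ < p := by rw [hNincard]; omega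
    have hex : ∃ b₀, b₀ ∈ Tin ∧ b₀ ∉ psi '' Nin := by
      by_contra hno
      push_neg at hno
      have hsub : Tin ⊆ psi '' Nin := hno
      have hle := Set.ncard_le_ncard hsub (Set.toFinite _)
      rw [hTincard] at hle
      omega
    obtain ⟨b₀, hb₀T, hb₀im⟩ := hex
    have hm₀i : b₀.1.1 ≠ b.1.1 := by rw [← hb₀T.1]; exact b₀.2
    set c : LKV (p+2) := ⟨(b.1.2, b₀.1.1), Ne.symm hb₀T.2⟩ with hc
    have hcT : c ∈ Tout := ⟨rfl, hm₀i.symm⟩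
    obtain ⟨w, hwNout, hwc⟩ := hbv.surjOn hcT
    have hwnin : w ∉ Nin := fun hwin => hasym v w hwNout hwin
    have hwnon : ∀ x ∈ Nin, ¬ G.Adj w x := by
      intro x hx hadj
      rcases (hGA w x).1 hadj with h | h
      · have harc := hhom h
        rw [hwc] at harc
        have h1 : (psi x).1.1 = b₀.1.1 := harc.1.symm
        have h2 : (psi x).1.2 = b₀.1.2 := (hsec x hx).trans hb₀T.1.symm
        exact hb₀im ⟨x, hx, Subtype.ext (Prod.ext h1 h2)⟩
      · have harc := hhom h
        rw [hwc] at harc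
        have h1 : (psi x).1.2 = b.1.2 := harc.1
        exact b.2 ((hsec x hx).symm.trans h1)
    -- build the forbidden star
    set sF : Finset V := (Set.toFinite Nin).toFinset with hsF
    have hmemsF : ∀ x, x ∈ sF ↔ x ∈ Nin := fun x => Set.Finite.mem_toFinset _
    have hwsF : w ∉ sF := fun h => hwnin ((hmemsF w).1 h)
    have hScard : (insert w sF).card = p + 1 := by
      rw [Finset.card_insert_of_notMem hwsF]
      have : sF.card = Nin.ncard := (Set.ncard_eq_toFinset_card _ _).symm
      omega
    have hvS : v ∉ insert w sF := by
      intro hvmem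
      rcases Finset.mem_insert.1 hvmem with h | h
      · subst h; exact hasym v v hwNout hwNout
      · exact hasym v v ((hmemsF v).1 h) ((hmemsF v).1 h)
    have hSadj : ∀ x ∈ insert w sF, G.Adj v x := by
      intro x hxmem
      rcases Finset.mem_insert.1 hxmem with h | h
      · subst h; exact (hGA v x).2 (Or.inl hwNout)
      · exact (hGA v x).2 (Or.inr ((hmemsF x).1 h))
    have hSind : ∀ x ∈ insert w sF, ∀ y ∈ insert w sF, ¬ G.Adj x y := by
      intro x hxmem y hymem
      rcases Finset.mem_insert.1 hxmem with hx | hx <;>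
        rcases Finset.mem_insert.1 hymem with hy | hy
      · subst hx; subst hy; exact G.irrefl
      · subst hx; exact hwnon y ((hmemsF y).1 hy)
      · subst hy; exact fun h => hwnon x ((hmemsF x).1 hx) h.symm
      · exact hindep x ((hmemsF x).1 hx) y ((hmemsF y).1 hy)
    exact hfree (emb_of_star hScard hvS hSadj hSind)
  have hsurjin : Set.SurjOn psi Nin Tin := by
    have h1 : (psi '' Nin).ncard = p := by
      rw [Set.ncard_image_of_injOn hinjin, hNincard]
    have h2 : psi '' Nin = Tin :=
      Set.eq_of_subset_of_ncard_le hmtin.image_subset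
        (by rw [hTincard, h1]) (Set.toFinite _)
    exact h2.ge
  have hbin : Set.BijOn psi Nin Tin := ⟨hmtin, hinjin, hsurjin⟩
  have hinjU : Set.InjOn psi (Nout ∪ Nin) := by
    rintro x (hx | hx) y (hy | hy) hxy
    · exact hbv.injOn hx hy hxy
    · exact absurd (hxy.symm ▸ hbin.mapsTo hy) (Set.disjoint_left.mp hdisjT (hbv.mapsTo hx))
    · exact absurd (hxy ▸ hbin.mapsTo hx) (Set.disjoint_left.mp hdisjT (hbv.mapsTo hy))
    · exact hinjin hx hy hxy
  have hTU : (LstarK (p+2)).neighborSet b = Tout ∪ Tin := by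
    ext y
    simp only [mem_neighborSet, Set.mem_union, hTout, hTin, Set.mem_setOf_eq, lstar_adj]
  rw [hNeq, hTU]
  exact hbv.union hbin hinjU
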